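/- Let x = (α, β, diag(a₁,a₂,a₃), 0) ∈ M with α ≠ 0. For every c ∈ F there exists g in the subgroup of G(M) generated by the transformations φ(C) and ψ(D) (C, D ∈ J) such that g(x) = (α, β − 2(a₁a₂/α)c, diag(a₁, a₂, a₃ + βc − (a₁a₂/α)c²), 0). -/

import Mathlib

open Matrix

namespace Freudenthal

variable (F : Type*) [Field F]

/-- The cubic Jordan algebra `J = M₃(F)`. -/
abbrev Mat := Matrix (Fin 3) (Fin 3) F

/-- The trace bilinear form `(A, B) = tr(A·B)` on `J`. -/
def tb (A B : Mat F) : F := (A * B).trace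

/-- The Freudenthal cross product `A × B = (A+B)# − A# − B#` (adjoint = adjugate). -/
def cross (A B : Mat F) : Mat F := (A + B).adjugate - A.adjugate - B.adjugate

/-- The Freudenthal module `M = F ⊕ F ⊕ J ⊕ J`, elements `(α, β, A, B)`. -/
abbrev FM := F × F × Mat F × Mat F

/-- The elementary transformation
`φ(C) : (α,β,A,B) ↦ (α + (B,C) + (A,C#) + β·det C, β, A + βC, B + A×C + βC#)`. -/
def phiMap (C : Mat F) (x : FM F) : FM F :=
  (x.1 + tb F x.2.2.2 C + tb F x.2.2.1 C.adjugate + x.2.1 * C.det,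
   x.2.1,
   x.2.2.1 + x.2.1 • C,
   x.2.2.2 + cross F x.2.2.1 C + x.2.1 • C.adjugate)

/-- The elementary transformation
`ψ(D) : (α,β,A,B) ↦ (α, β + (A,D) + (B,D#) + α·det D, A + B×D + αD#, B + αD)`. -/
def psiMap (D : Mat F) (x : FM F) : FM F :=
  (x.1,
   x.2.1 + tb F x.2.2.1 D + tb F x.2.2.2 D.adjugate + x.1 * D.det,
   x.2.2.1 + cross F x.2.2.2 D + x.1 • D.adjugate,
   x.2.2.2 + x.1 • D)

/-- The subgroup of `G(M)` generated by the transformations `φ(C)` and `ψ(D)`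
(`C, D ∈ J`): predicate for being a finite product of such transformations. -/
inductive PhiPsiWord : (FM F → FM F) → Prop
  | phi (C : Mat F) : PhiPsiWord (phiMap F C)
  | psi (D : Mat F) : PhiPsiWord (psiMap F D)
  | comp {g h : FM F → FM F} : PhiPsiWord g → PhiPsiWord h → PhiPsiWord (g ∘ h)

end Freudenthal

open Freudenthal


section Aux
variable {F : Type*} [Field F]

private lemma diag3_adjugate (x y z : F) :
    (Matrix.diagonal ![x,y,z]).adjugate = Matrix.diagonal ![y*z, x*z, x*y] := by
  ext i j
  rw [Matrix.adjugate_fin_three]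
  fin_cases i <;> fin_cases j <;> simp [Matrix.diagonal, Matrix.vecHead, Matrix.vecTail]

private lemma diag3_det (x y z : F) : (Matrix.diagonal ![x,y,z]).det = x*y*z := by
  rw [Matrix.det_fin_three]; simp [Matrix.diagonal, Matrix.vecHead, Matrix.vecTail]

private lemma diag3_add (x y z u v w : F) :
    Matrix.diagonal ![x,y,z] + Matrix.diagonal ![u,v,w]
      = Matrix.diagonal ![x+u, y+v, z+w] := by
  ext i j; fin_cases i <;> fin_cases j <;> simp [Matrix.diagonal, Matrix.vecHead, Matrix.vecTail]

private lemma diag3_smul (r x y z : F) :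
    r • Matrix.diagonal ![x,y,z] = Matrix.diagonal ![r*x, r*y, r*z] := by
  ext i j; fin_cases i <;> fin_cases j <;> simp [Matrix.diagonal, Matrix.vecHead, Matrix.vecTail]

private lemma diag3_tb (x y z u v w : F) :
    tb F (Matrix.diagonal ![x,y,z]) (Matrix.diagonal ![u,v,w]) = x*u + y*v + z*w := by
  rw [tb, Matrix.trace_fin_three]
  simp [Matrix.mul_apply, Fin.sum_univ_succ, Matrix.diagonal, Matrix.vecHead, Matrix.vecTail]

private lemma diag3_zero : (0 : Matrix (Fin 3) (Fin 3) F) = Matrix.diagonal ![0,0,0] := by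
  ext i j; fin_cases i <;> fin_cases j <;> simp [Matrix.diagonal, Matrix.vecHead, Matrix.vecTail]

private lemma diag3_cross (x y z u v w : F) :
    cross F (Matrix.diagonal ![x,y,z]) (Matrix.diagonal ![u,v,w])
      = Matrix.diagonal ![y*w+v*z, x*w+u*z, x*v+u*y] := by
  rw [cross, diag3_add, diag3_adjugate, diag3_adjugate, diag3_adjugate, sub_eq_add_neg,
    sub_eq_add_neg]
  have hneg : ∀ p q r : F, -Matrix.diagonal ![p,q,r] = Matrix.diagonal ![-p,-q,-r] := by
    intro p q r
    ext i j; fin_cases i <;> fin_cases j <;> simp [Matrix.diagonal, Matrix.vecHead, Matrix.vecTail]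
  rw [hneg, hneg, diag3_add, diag3_add]
  funext i; fin_cases i <;> simp <;> ring

private lemma diag3_congr {x y z u v w : F} (h1 : x = u) (h2 : y = v) (h3 : z = w) :
    Matrix.diagonal ![x,y,z] = Matrix.diagonal ![u,v,w] := by
  rw [h1, h2, h3]
end Aux

theorem diagonal_reduction_step (F : Type*) [Field F] (h2 : (2 : F) ≠ 0) (h3 : (3 : F) ≠ 0)
    (α β a₁ a₂ a₃ c : F) (hα : α ≠ 0) :
    ∃ g : FM F → FM F, PhiPsiWord F g ∧
      g (α, β, Matrix.diagonal ![a₁, a₂, a₃], 0)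
        = (α, β - 2 * (a₁ * a₂ / α) * c,
           Matrix.diagonal ![a₁, a₂, a₃ + β * c - (a₁ * a₂ / α) * c ^ 2], 0) := by
  refine ⟨psiMap F (Matrix.diagonal ![-(a₂*c/α), -(a₁*c/α), 0]) ∘
      phiMap F (Matrix.diagonal ![0,0,c]),
    PhiPsiWord.comp (PhiPsiWord.psi _) (PhiPsiWord.phi _), ?_⟩
  simp only [Function.comp_apply, phiMap, psiMap, diag3_zero (F := F)]
  simp only [diag3_adjugate, diag3_det, diag3_add, diag3_smul, diag3_tb, diag3_cross]
  refine Prod.ext ?_ (Prod.ext ?_ (Prod.ext ?_ ?_))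
  · field_simp; ring
  · field_simp; ring
  · refine diag3_congr ?_ ?_ ?_ <;> field_simp <;> try ring
  · refine diag3_congr ?_ ?_ ?_ <;> field_simp <;> try ring
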